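/- Let ν > 0, b > 0, and let m ≥ 0 be an integer. Then for every x > 0, ρ_{ν+m,b}(x) = (−b)^{−m} r_{m,ν}(b²x) ρ_{ν,b}(x) + (−b)^{1−m} s_{m,ν}(b²x) ρ_{ν+1,b}(x). -/

import Mathlib

open MeasureTheory Real Filter Set Finset

/-- Modified Bessel function of the first kind. -/
noncomputable def besselI (μ z : ℝ) : ℝ :=
  (z / 2) ^ μ * ∑' k : ℕ, (z ^ 2 / 4) ^ k / (Nat.factorial k * Real.Gamma (μ + k + 1))

/-- Modified Bessel function of the second kind. -/
noncomputable def besselK (ν z : ℝ) : ℝ :=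
  ∫ t in Set.Ioi (0 : ℝ), Real.exp (-z * Real.cosh t) * Real.cosh (ν * t)

/-- Scaled modified Bessel function of the first kind. -/
noncomputable def omegaW (μ a x : ℝ) : ℝ := x ^ (μ / 2) * besselI μ (2 * a * Real.sqrt x)

/-- Scaled modified Bessel function of the second kind. -/
noncomputable def rhoW (ν b x : ℝ) : ℝ := x ^ (ν / 2) * besselK ν (2 * b * Real.sqrt x)

/-- Pochhammer symbol (rising factorial) for a real argument. -/
noncomputable def poch (t : ℝ) (k : ℕ) : ℝ := ∏ i ∈ Finset.range k, (t + i)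

/-- Pochhammer symbol (rising factorial) for a complex argument. -/
noncomputable def cpoch (t : ℂ) (k : ℕ) : ℂ := ∏ i ∈ Finset.range k, (t + i)

/-- The polynomial `r_{m,μ}` built from Lommel polynomials. -/
noncomputable def rPoly (μ : ℝ) (m : ℕ) (x : ℝ) : ℝ :=
  if m = 0 then 1
  else (-1 : ℝ) ^ m * ∑ j ∈ Finset.range (m / 2),
    ((m - j - 2).choose j : ℝ) * poch (μ + j + 2) (m - 2 * j - 2) * x ^ (j + 1)

/-- The polynomial `s_{m,μ}` built from Lommel polynomials. -/
noncomputable def sPoly (μ : ℝ) (m : ℕ) (x : ℝ) : ℝ :=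
  if m = 0 then 0
  else (-1 : ℝ) ^ (m + 1) * ∑ j ∈ Finset.range ((m + 1) / 2),
    ((m - j - 1).choose j : ℝ) * poch (μ + j + 1) (m - 2 * j - 1) * x ^ j

/-- The linear form `Q_n^{μ,ν,a,b}`. -/
noncomputable def Qmop (μ ν a b : ℝ) (n : ℕ) (x : ℝ) : ℝ :=
  (-1 : ℝ) ^ n * ∑ j ∈ Finset.range (n + 1),
    (n.choose j : ℝ) * (Real.Gamma (μ + ν + 1 + n) / Real.Gamma (μ + ν + 1 + j)) *
      ((a ^ 2 - b ^ 2) / a) ^ j * omegaW (μ + j) a x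

/-- The dual linear form `P_n^{μ,ν,a,b}`. -/
noncomputable def Pmop (μ ν a b : ℝ) (n : ℕ) (x : ℝ) : ℝ :=
  (-1 : ℝ) ^ n * (2 * (b ^ 2 - a ^ 2) ^ (μ + ν + 1) / (a ^ μ * b ^ ν * Nat.factorial n)) *
    ∑ j ∈ Finset.range (n + 1),
      (n.choose j : ℝ) * ((a ^ 2 - b ^ 2) / b) ^ j * rhoW (ν + j) b x /
        Real.Gamma (μ + ν + 1 + j)

/-- Monic generalized Laguerre polynomial. -/
noncomputable def laguerreM (α : ℝ) (n : ℕ) (x : ℝ) : ℝ :=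
  (-1 : ℝ) ^ n * ∑ j ∈ Finset.range (n + 1),
    (n.choose j : ℝ) * (Real.Gamma (α + 1 + n) / Real.Gamma (α + 1 + j)) * (-x) ^ j

/-- `Q` with integer index, vanishing for negative index. -/
noncomputable def QmopZ (μ ν a b : ℝ) (m : ℤ) (x : ℝ) : ℝ :=
  if 0 ≤ m then Qmop μ ν a b m.toNat x else 0

/-- `P` with integer index, vanishing for negative index. -/
noncomputable def PmopZ (μ ν a b : ℝ) (m : ℤ) (x : ℝ) : ℝ :=
  if 0 ≤ m then Pmop μ ν a b m.toNat x else 0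

/-- `f` has a sign change at `x₀`: it takes both positive and negative values in
every neighborhood of `x₀`. -/
def SignChangeAt (f : ℝ → ℝ) (x₀ : ℝ) : Prop :=
  ∀ ε > 0, (∃ y, |y - x₀| < ε ∧ 0 < f y) ∧ (∃ y, |y - x₀| < ε ∧ f y < 0)

/-- Recurrence coefficient `a_{2,m}`. -/
noncomputable def coefA2 (μ ν a b m : ℝ) : ℝ := (a / (b ^ 2 - a ^ 2)) ^ 2

/-- Recurrence coefficient `a_{1,m}`. -/
noncomputable def coefA1 (μ ν a b m : ℝ) : ℝ :=
  2 * (μ + ν + 2 * m + 2) * (a / (b ^ 2 - a ^ 2)) ^ 2 + (μ + m + 1) / (b ^ 2 - a ^ 2)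

/-- Recurrence coefficient `a_{0,m}`. -/
noncomputable def coefA0 (μ ν a b m : ℝ) : ℝ :=
  (6 * m ^ 2 + 6 * (μ + ν + 1) * m + (μ + ν + 1) * (μ + ν + 2)) * (a / (b ^ 2 - a ^ 2)) ^ 2 +
    (3 * m ^ 2 + (4 * μ + 2 * ν + 3) * m + (μ + 1) * (μ + ν + 1)) / (b ^ 2 - a ^ 2)

/-- Recurrence coefficient `a_{-1,m}`. -/
noncomputable def coefAm1 (μ ν a b m : ℝ) : ℝ :=
  m * (μ + ν + m) * (2 * (μ + ν + 2) * (b / (b ^ 2 - a ^ 2)) ^ 2 - (ν + m) / (b ^ 2 - a ^ 2))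

/-- Recurrence coefficient `a_{-2,m}`. -/
noncomputable def coefAm2 (μ ν a b m : ℝ) : ℝ :=
  (m - 1) * m * (μ + ν + m - 1) * (μ + ν + m) * (b / (b ^ 2 - a ^ 2)) ^ 2

lemma key_bound (z c : ℝ) (hz : 0 < z) : ∀ᶠ t in atTop, c * t - z * Real.cosh t ≤ -t := by
  filter_upwards [eventually_ge_atTop (max 0 (8 * (|c| + 1) / z))] with t ht
  have ht0 : 0 ≤ t := le_trans (le_max_left _ _) ht
  have ht1 : 8 * (|c| + 1) / z ≤ t := le_trans (le_max_right _ _) ht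
  have h1 : Real.exp t ≥ (1 + t / 2) ^ 2 := by
    have h := Real.add_one_le_exp (t / 2)
    have h2 : Real.exp t = Real.exp (t / 2) * Real.exp (t / 2) := by
      rw [← Real.exp_add]; ring_nf
    nlinarith [Real.exp_pos (t / 2)]
  have hcosh : Real.cosh t ≥ Real.exp t / 2 := by
    rw [Real.cosh_eq]; nlinarith [Real.exp_pos (-t)]
  have hct : c * t ≤ |c| * t := mul_le_mul_of_nonneg_right (le_abs_self c) ht0
  have h8 : 8 * (|c| + 1) ≤ z * t := by
    rw [div_le_iff₀ hz] at ht1; linarith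
  nlinarith [abs_nonneg c, sq_nonneg t, mul_le_mul_of_nonneg_right h8 ht0]

lemma cosh_le_exp_abs (x : ℝ) : Real.cosh x ≤ Real.exp |x| := by
  rw [Real.cosh_eq]
  rcases le_or_gt 0 x with h | h
  · rw [abs_of_nonneg h]
    nlinarith [Real.exp_le_exp.2 (neg_le_self h), Real.exp_pos x]
  · rw [abs_of_neg h]
    nlinarith [Real.exp_le_exp.2 (le_neg_self_iff.2 h.le), Real.exp_pos (-x)]

lemma besselK_integrable (ν z : ℝ) (hz : 0 < z) :
    IntegrableOn (fun t => Real.exp (-z * Real.cosh t) * Real.cosh (ν * t)) (Ioi (0:ℝ)) := by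
  apply integrable_of_isBigO_exp_neg (one_pos) _ _
  · exact Continuous.continuousOn (by continuity)
  · rw [Asymptotics.isBigO_iff]
    refine ⟨1, ?_⟩
    filter_upwards [key_bound z (|ν| + 1) hz, eventually_ge_atTop (0:ℝ)] with t hkb ht0
    have h1 : Real.cosh (ν * t) ≤ Real.exp (|ν| * t) := by
      calc Real.cosh (ν * t) ≤ Real.exp |ν * t| := cosh_le_exp_abs _
      _ = Real.exp (|ν| * t) := by rw [abs_mul, abs_of_nonneg ht0]
    have h2 : Real.exp (-z * Real.cosh t) * Real.cosh (ν * t)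
        ≤ Real.exp (|ν| * t - z * Real.cosh t) := by
      calc Real.exp (-z * Real.cosh t) * Real.cosh (ν * t)
          ≤ Real.exp (-z * Real.cosh t) * Real.exp (|ν| * t) :=
            mul_le_mul_of_nonneg_left h1 (Real.exp_pos _).le
      _ = Real.exp (|ν| * t - z * Real.cosh t) := by rw [← Real.exp_add]; ring_nf
    have h3 : |ν| * t - z * Real.cosh t ≤ -t := by
      have h := hkb; nlinarith
    have hpos : 0 < Real.cosh (ν * t) := Real.cosh_pos _
    rw [Real.norm_eq_abs, Real.norm_eq_abs, abs_of_pos (mul_pos (Real.exp_pos _) hpos),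
      abs_of_pos (Real.exp_pos _), one_mul, neg_one_mul]
    exact le_trans h2 (Real.exp_le_exp.2 h3)

lemma besselK_rec (ν z : ℝ) (hz : 0 < z) :
    besselK (ν + 2) z = besselK ν z + (2 * (ν + 1) / z) * besselK (ν + 1) z := by
  set μ := ν + 1 with hμ
  set F : ℝ → ℝ := fun t => Real.exp (-z * Real.cosh t) * Real.sinh (μ * t) with hF
  set A : ℝ → ℝ := fun t => -(z/2) * (Real.exp (-z * Real.cosh t) * Real.cosh ((ν+2) * t)) with hA
  set B : ℝ → ℝ := fun t => (z/2) * (Real.exp (-z * Real.cosh t) * Real.cosh (ν * t)) with hB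
  set C : ℝ → ℝ := fun t => μ * (Real.exp (-z * Real.cosh t) * Real.cosh (μ * t)) with hC
  set F' : ℝ → ℝ := fun t => A t + B t + C t with hF'
  have hiA : IntegrableOn A (Ioi (0:ℝ)) := (besselK_integrable (ν+2) z hz).const_mul _
  have hiB : IntegrableOn B (Ioi (0:ℝ)) := (besselK_integrable ν z hz).const_mul _
  have hiC : IntegrableOn C (Ioi (0:ℝ)) := (besselK_integrable μ z hz).const_mul _
  have hderiv : ∀ t : ℝ, HasDerivAt F (F' t) t := by
    intro t
    have h1 : HasDerivAt (fun t : ℝ => -z * Real.cosh t) (-z * Real.sinh t) t :=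
      (Real.hasDerivAt_cosh t).const_mul (-z)
    have h2 : HasDerivAt (fun t : ℝ => Real.exp (-z * Real.cosh t))
        (Real.exp (-z * Real.cosh t) * (-z * Real.sinh t)) t := h1.exp
    have h3 : HasDerivAt (fun t : ℝ => Real.sinh (μ * t)) (Real.cosh (μ * t) * μ) t := by
      exact ((hasDerivAt_id t).const_mul μ).sinh.congr_deriv (by simp)
    have h4 := h2.mul h3
    refine h4.congr_deriv ?_
    symm
    have key : Real.sinh t * Real.sinh (μ * t)
        = (Real.cosh ((ν + 2) * t) - Real.cosh (ν * t)) / 2 := by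
      have e1 : (ν + 2) * t = μ * t + t := by rw [hμ]; ring
      have e2 : ν * t = μ * t - t := by rw [hμ]; ring
      rw [e1, e2, Real.cosh_add, Real.cosh_sub]; ring
    rw [hF', hA, hB, hC]
    simp only
    linear_combination (z * Real.exp (-z * Real.cosh t)) * key
  have hint : IntegrableOn F' (Ioi (0:ℝ)) := (hiA.add hiB).add hiC
  have htend : Tendsto F atTop (nhds 0) := by
    apply squeeze_zero_norm' _ Real.tendsto_exp_neg_atTop_nhds_zero
    filter_upwards [key_bound z |μ| hz, eventually_ge_atTop (0:ℝ)] with t hkb ht0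
    have h1 : |Real.sinh (μ * t)| ≤ Real.exp (|μ| * t) := by
      rw [Real.abs_sinh]
      calc Real.sinh |μ * t| ≤ Real.cosh |μ * t| := by
            rw [Real.sinh_eq, Real.cosh_eq]; nlinarith [Real.exp_pos (-|μ * t|)]
      _ ≤ Real.exp |(|μ * t|)| := cosh_le_exp_abs _
      _ = Real.exp (|μ| * t) := by rw [abs_abs, abs_mul, abs_of_nonneg ht0]
    calc ‖F t‖ = Real.exp (-z * Real.cosh t) * |Real.sinh (μ * t)| := by
          rw [hF]; simp only
          rw [norm_mul, Real.norm_eq_abs, Real.norm_eq_abs, abs_of_pos (Real.exp_pos _)]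
    _ ≤ Real.exp (-z * Real.cosh t) * Real.exp (|μ| * t) :=
          mul_le_mul_of_nonneg_left h1 (Real.exp_pos _).le
    _ = Real.exp (|μ| * t - z * Real.cosh t) := by rw [← Real.exp_add]; ring_nf
    _ ≤ Real.exp (-t) := Real.exp_le_exp.2 hkb
  have h0 : (∫ t in Ioi (0:ℝ), F' t) = 0 - F 0 :=
    integral_Ioi_of_hasDerivAt_of_tendsto (hderiv 0).continuousAt.continuousWithinAt
      (fun t _ => hderiv t) hint htend
  have hF0 : F 0 = 0 := by simp [hF]
  rw [hF0, sub_zero] at h0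
  have hsplit : (∫ t in Ioi (0:ℝ), F' t)
      = -(z/2) * besselK (ν+2) z + (z/2) * besselK ν z + μ * besselK μ z := by
    have hiAB : Integrable (fun t => A t + B t) (volume.restrict (Ioi (0:ℝ))) := hiA.add hiB
    rw [hF']
    rw [integral_add hiAB hiC, integral_add hiA hiB, hA, hB, hC]
    simp only
    rw [integral_const_mul, integral_const_mul, integral_const_mul]
    rfl
  rw [hsplit] at h0
  have hzne : z ≠ 0 := hz.ne'
  have h5 : besselK (ν+2) z * z = besselK ν z * z + 2 * μ * besselK μ z := by
    linear_combination (-2 : ℝ) * h0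
  field_simp
  linear_combination h5

noncomputable def TT (ν : ℝ) (m : ℕ) (y : ℝ) : ℝ :=
  ∑ j ∈ Finset.range ((m + 1) / 2),
    ((m - j - 1).choose j : ℝ) * poch (ν + j + 1) (m - 2 * j - 1) * y ^ j

lemma poch_succ (t : ℝ) (k : ℕ) : poch t (k + 1) = poch t k * (t + k) := by
  rw [poch, poch, Finset.prod_range_succ]

lemma poch_succ' (t : ℝ) (k : ℕ) : poch t (k + 1) = t * poch (t + 1) k := by
  rw [poch, poch, Finset.prod_range_succ']
  push_cast
  rw [add_zero, mul_comm]
  congr 1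
  exact Finset.prod_congr rfl fun i _ => by push_cast; ring

lemma TT_rec (ν : ℝ) (m : ℕ) (y : ℝ) :
    TT ν (m + 2) y = y * TT ν m y + (ν + m + 1) * TT ν (m + 1) y := by
  have hr2 : (m + 2 + 1) / 2 = (m + 1) / 2 + 1 := by omega
  have hr1 : (m + 1 + 1) / 2 = m / 2 + 1 := by omega
  have hext : TT ν (m + 1) y = ∑ j ∈ Finset.range ((m + 1) / 2 + 1),
      ((m + 1 - j - 1).choose j : ℝ) * poch (ν + j + 1) (m + 1 - 2 * j - 1) * y ^ j := by
    rw [TT, hr1]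
    apply Finset.sum_subset
    · apply Finset.range_subset_range.2; omega
    · intro j hj hj'
      simp only [Finset.mem_range] at hj hj'
      have : m + 1 - j - 1 < j := by omega
      rw [Nat.choose_eq_zero_of_lt this]
      simp
  rw [TT, hext, TT, hr2, Finset.mul_sum, Finset.mul_sum,
    Finset.sum_range_succ', Finset.sum_range_succ']
  have hj0 : ((m + 2 - 0 - 1).choose 0 : ℝ) * poch (ν + ((0:ℕ):ℝ) + 1) (m + 2 - 2 * 0 - 1)
        * y ^ (0:ℕ)
      = (ν + m + 1) * (((m + 1 - 0 - 1).choose 0 : ℝ) * poch (ν + ((0:ℕ):ℝ) + 1)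
        (m + 1 - 2 * 0 - 1) * y ^ (0:ℕ)) := by
    have e1 : m + 2 - 2 * 0 - 1 = m + 1 := by omega
    have e2 : m + 1 - 2 * 0 - 1 = m := by omega
    have e3 : m + 2 - 0 - 1 = m + 1 := by omega
    have e4 : m + 1 - 0 - 1 = m := by omega
    simp only [e1, e2, e3, e4]
    rw [poch_succ]
    push_cast [Nat.choose_zero_right]
    ring
  rw [hj0, ← add_assoc, ← Finset.sum_add_distrib]
  congr 1
  apply Finset.sum_congr rfl
  intro i hi
  simp only [Finset.mem_range] at hi
  have h2i : 2 * i + 1 ≤ m := by omega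
  rcases Nat.lt_or_ge (2 * i + 2) (m + 1) with hcase | hcase
  · -- 2i+2 ≤ m
    have hA : m + 2 - (i + 1) - 1 = (m - i - 1) + 1 := by omega
    have hB : m + 1 - (i + 1) - 1 = m - i - 1 := by omega
    have hk1 : m + 2 - 2 * (i + 1) - 1 = (m - 2 * i - 2) + 1 := by omega
    have hk2 : m - 2 * i - 1 = (m - 2 * i - 2) + 1 := by omega
    have hk3 : m + 1 - 2 * (i + 1) - 1 = m - 2 * i - 2 := by omega
    rw [hA, hB, hk1, hk2, hk3, poch_succ, poch_succ']
    have harg : (ν + ↑i + 1 + 1 : ℝ) = ν + ↑(i + 1) + 1 := by push_cast; ring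
    rw [harg]
    have hkc : ((m - 2*i - 2 : ℕ) : ℝ) = (m:ℝ) - 2*↑i - 2 := by
      rw [Nat.cast_sub (by omega), Nat.cast_sub (by omega)]; push_cast; ring
    rw [hkc]
    have hpas : (((m - i - 1) + 1).choose (i+1) : ℝ)
        = ((m - i - 1).choose i : ℝ) + ((m - i - 1).choose (i+1) : ℝ) := by
      rw [Nat.choose_succ_succ]; push_cast; ring
    have hcsr : ((m - i - 1).choose (i+1) : ℝ) * (↑i+1)
        = ((m - i - 1).choose i : ℝ) * ((m:ℝ) - 2*↑i - 1) := by
      have h := Nat.choose_succ_right_eq (m - i - 1) i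
      have h2 : m - i - 1 - i = m - 2*i - 1 := by omega
      rw [h2] at h
      have hc : ((m - 2*i - 1 : ℕ) : ℝ) = (m:ℝ) - 2*↑i - 1 := by
        rw [Nat.cast_sub (by omega), Nat.cast_sub (by omega)]; push_cast; ring
      calc ((m - i - 1).choose (i+1) : ℝ) * (↑i+1)
          = (((m - i - 1).choose (i+1) * (i+1) : ℕ) : ℝ) := by push_cast; ring
        _ = (((m - i - 1).choose i * (m - 2*i - 1) : ℕ) : ℝ) := by rw [h]
        _ = ((m - i - 1).choose i : ℝ) * ((m:ℝ) - 2*↑i - 1) := by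
            push_cast [hc]; ring
    push_cast
    push_cast at hpas hcsr
    set P := poch (ν + (↑i + 1) + 1) (m - 2*i - 2) with hP
    linear_combination ((ν + ((i:ℝ)+1) + 1 + ((m:ℝ) - 2*(i:ℝ) - 2)) * P * y^(i+1)) * hpas
      - (P * y^(i+1)) * hcsr
  · -- 2i+1 = m
    have hm : m = 2 * i + 1 := by omega
    subst hm
    have e1 : 2 * i + 1 + 2 - (i + 1) - 1 = i + 1 := by omega
    have e2 : 2 * i + 1 + 2 - 2 * (i + 1) - 1 = 0 := by omega
    have e3 : 2 * i + 1 - i - 1 = i := by omega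
    have e4 : 2 * i + 1 - 2 * i - 1 = 0 := by omega
    have e5 : 2 * i + 1 + 1 - (i + 1) - 1 = i := by omega
    have e6 : 2 * i + 1 + 1 - 2 * (i + 1) - 1 = 0 := by omega
    rw [e1, e2, e3, e4, e5, e6, Nat.choose_self, Nat.choose_self, Nat.choose_succ_self]
    simp [poch]
    ring

lemma sPoly_eq_TT (ν : ℝ) (m : ℕ) (y : ℝ) : sPoly ν m y = (-1:ℝ)^(m+1) * TT ν m y := by
  rcases Nat.eq_zero_or_pos m with h | h
  · subst h; simp [sPoly, TT]
  · rw [sPoly, if_neg (by omega), TT]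

lemma rPoly_eq_TT (ν : ℝ) (m : ℕ) (y : ℝ) (h : 1 ≤ m) :
    rPoly ν m y = (-1:ℝ)^m * (y * TT (ν+1) (m-1) y) := by
  rw [rPoly, if_neg (by omega), TT]
  have hr : (m - 1 + 1) / 2 = m / 2 := by omega
  rw [hr]
  simp only [Finset.mul_sum]
  apply Finset.sum_congr rfl
  intro j hj
  have e1 : m - 1 - j - 1 = m - j - 2 := by omega
  have e2 : m - 1 - 2*j - 1 = m - 2*j - 2 := by omega
  have e3 : (ν + 1 + ↑j + 1 : ℝ) = ν + ↑j + 2 := by ring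
  rw [e1, e2, e3]
  ring

lemma sPoly_rec (ν : ℝ) (m : ℕ) (y : ℝ) :
    sPoly ν (m+2) y = y * sPoly ν m y - (ν + m + 1) * sPoly ν (m+1) y := by
  rw [sPoly_eq_TT, sPoly_eq_TT, sPoly_eq_TT, TT_rec]
  rw [show (-1:ℝ)^(m+2+1) = (-1:ℝ)^(m+1) from by ring,
    show (-1:ℝ)^(m+1+1) = -(-1:ℝ)^(m+1) from by ring]
  ring

lemma rPoly_rec (ν : ℝ) (m : ℕ) (y : ℝ) :
    rPoly ν (m+2) y = y * rPoly ν m y - (ν + m + 1) * rPoly ν (m+1) y := by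
  rcases Nat.eq_zero_or_pos m with h | h
  · subst h
    rw [rPoly, rPoly, rPoly]
    norm_num [poch]
  · rw [rPoly_eq_TT ν (m+2) y (by omega), rPoly_eq_TT ν m y h,
      rPoly_eq_TT ν (m+1) y (by omega)]
    have e1 : m + 2 - 1 = (m - 1) + 2 := by omega
    have e2 : m + 1 - 1 = (m - 1) + 1 := by omega
    rw [e1, e2, TT_rec]
    have e3 : (ν + 1 + ↑(m-1) + 1 : ℝ) = ν + ↑m + 1 := by
      have : ((m - 1 : ℕ) : ℝ) = (m : ℝ) - 1 := by
        rw [Nat.cast_sub (by omega)]; push_cast; ring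
      rw [this]; ring
    rw [e3]
    rw [show (-1:ℝ)^(m+2) = (-1:ℝ)^m from by ring,
      show (-1:ℝ)^(m+1) = -(-1:ℝ)^m from by ring]
    ring

lemma rhoW_rec (μ b x : ℝ) (hb : 0 < b) (hx : 0 < x) :
    rhoW (μ + 2) b x = ((μ + 1) / b) * rhoW (μ + 1) b x + x * rhoW μ b x := by
  have hs : 0 < Real.sqrt x := Real.sqrt_pos.2 hx
  have hz : 0 < 2 * b * Real.sqrt x := by positivity
  have hK := besselK_rec μ (2 * b * Real.sqrt x) hz
  rw [rhoW, rhoW, rhoW, hK]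
  have e1 : x ^ ((μ + 2) / 2) = x ^ (μ / 2) * x := by
    rw [show (μ + 2) / 2 = μ / 2 + 1 by ring, Real.rpow_add hx, Real.rpow_one]
  have e2 : x ^ ((μ + 2) / 2) = x ^ ((μ + 1) / 2) * Real.sqrt x := by
    rw [show (μ + 2) / 2 = (μ + 1) / 2 + 1 / 2 by ring, Real.rpow_add hx,
      Real.sqrt_eq_rpow x]
  have e3 : Real.sqrt x * (2 * (μ + 1) / (2 * b * Real.sqrt x)) = (μ + 1) / b := by
    field_simp
  linear_combination besselK μ (2 * b * Real.sqrt x) * e1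
    + (2 * (μ + 1) / (2 * b * Real.sqrt x) * besselK (μ + 1) (2 * b * Real.sqrt x)) * e2
    + (x ^ ((μ + 1) / 2) * besselK (μ + 1) (2 * b * Real.sqrt x)) * e3

/-- expansion of `ρ_{ν+m,b}` in terms of `ρ_{ν,b}` and `ρ_{ν+1,b}`. -/
theorem rhoW_expansion (ν b : ℝ) (hν : 0 < ν) (hb : 0 < b) (m : ℕ) (x : ℝ) (hx : 0 < x) :
    rhoW (ν + m) b x =
      (-b) ^ (-(m : ℤ)) * rPoly ν m (b ^ 2 * x) * rhoW ν b x +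
        (-b) ^ (1 - (m : ℤ)) * sPoly ν m (b ^ 2 * x) * rhoW (ν + 1) b x := by
  have hbn : (-b : ℝ) ≠ 0 := neg_ne_zero.2 hb.ne'
  set Q : ℕ → Prop := fun n =>
    rhoW (ν + n) b x =
      (-b) ^ (-(n : ℤ)) * rPoly ν n (b ^ 2 * x) * rhoW ν b x +
        (-b) ^ (1 - (n : ℤ)) * sPoly ν n (b ^ 2 * x) * rhoW (ν + 1) b x with hQ
  suffices h : ∀ n : ℕ, Q n ∧ Q (n + 1) from (h m).1
  intro n
  induction n with
  | zero =>
    constructor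
    · show rhoW (ν + (0:ℕ)) b x = _
      norm_num [rPoly, sPoly]
    · show rhoW (ν + (1:ℕ)) b x = _
      norm_num [rPoly, sPoly, poch]
  | succ n ih =>
    refine ⟨ih.2, ?_⟩
    show rhoW (ν + ((n+2 : ℕ) : ℝ)) b x = _
    have ihn := ih.1
    have ihn1 := ih.2
    rw [hQ] at ihn ihn1
    have hc2 : (ν + ((n+2 : ℕ) : ℝ)) = (ν + (n:ℝ)) + 2 := by push_cast; ring
    have hc1 : (ν + (n:ℝ)) + 1 = ν + ((n+1 : ℕ) : ℝ) := by push_cast; ring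
    rw [hc2, rhoW_rec _ _ _ hb hx, hc1, ihn, ihn1, rPoly_rec, sPoly_rec]
    have E1 : (-((n+2:ℕ) : ℤ)) = -(n:ℤ) - 2 := by push_cast; ring
    have E2 : ((1:ℤ) - ((n+2:ℕ) : ℤ)) = -(n:ℤ) - 1 := by push_cast; ring
    have E3 : (-((n+1:ℕ) : ℤ)) = -(n:ℤ) - 1 := by push_cast; ring
    have E4 : ((1:ℤ) - ((n+1:ℕ) : ℤ)) = -(n:ℤ) := by push_cast; ring
    rw [E1, E2, E3, E4]
    have hcoef : (ν + ((n+1:ℕ):ℝ)) = ν + (n:ℝ) + 1 := by push_cast; ring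
    rw [hcoef]
    simp only [zpow_sub₀ hbn, zpow_one, zpow_neg, zpow_natCast, zpow_two]
    have hpn : ((-b:ℝ)) ^ n ≠ 0 := pow_ne_zero _ hbn
    field_simp
    ring
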